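/- For every t > 0, every x = (x_1,x_2) in R^2, and all vectors Psi, Phi in C^2, setting s^2 = t^2 - |x|^2, one has the decomposition Psi^* gamma^0 Phi = (1/4) [ (Psi)_-^* gamma^0 (Phi)_- + (Psi)_-^* gamma^0 (Phi)_+ + (Psi)_+^* gamma^0 (Phi)_- + (s^2/t^2) Psi^* gamma^0 Phi ]. -/

import Mathlib

noncomputable section

open MeasureTheory Matrix Finset Real Filter

/-- Spacetime `ℝ^{1+2}`: coordinate `0` is time, coordinates `1, 2` are space. -/
abbrev Spt : Type := Fin 3 → ℝ
/-- Space `ℝ²`. -/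
abbrev Sp : Type := Fin 2 → ℝ
/-- Spinor space `ℂ²`. -/
abbrev Spinor : Type := Fin 2 → ℂ

/-- Minkowski metric `g = diag(-1, 1, 1)`. -/
def mink (μ ν : Fin 3) : ℝ := if μ = ν then (if μ = 0 then -1 else 1) else 0

/-- A choice of `2 × 2` complex Dirac matrices `γ^0, γ^1, γ^2` satisfying
`γ^μ γ^ν + γ^ν γ^μ = -2 g^{μν} I₂` and `(γ^μ)^* = -g_{μν} γ^ν`. -/
structure DiracMatrices where
  γ : Fin 3 → Matrix (Fin 2) (Fin 2) ℂ
  clifford : ∀ μ ν, γ μ * γ ν + γ ν * γ μ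
      = ((-2 * mink μ ν : ℝ) : ℂ) • (1 : Matrix (Fin 2) (Fin 2) ℂ)
  adjoint : ∀ μ, (γ μ)ᴴ = ((-(mink μ μ) : ℝ) : ℂ) • γ μ

/-- Partial derivative `∂_μ` of a function on spacetime. -/
def pt {V : Type*} [NormedAddCommGroup V] [NormedSpace ℝ V] (μ : Fin 3) (f : Spt → V) :
    Spt → V :=
  fun p => fderiv ℝ f p (Pi.single μ 1)

/-- `|x|²` for spatial points. -/
def xrsq (x : Sp) : ℝ := ∑ a : Fin 2, (x a) ^ 2

/-- `|x|²` of the spatial part of a spacetime point. -/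
def rsq (p : Spt) : ℝ := ∑ a : Fin 2, (p a.succ) ^ 2

/-- The interior of the light cone, `K = {(t,x) : t ≥ 2, |x| < t - 1}`. -/
def inK (p : Spt) : Prop := 2 ≤ p 0 ∧ Real.sqrt (rsq p) < p 0 - 1

/-- Parametrization of the hyperboloid `H_s` by space: `x ↦ (√(s² + |x|²), x)`. -/
def onH (s : ℝ) (x : Sp) : Spt := Fin.cons (Real.sqrt (s ^ 2 + xrsq x)) x

/-- Squared pointwise (Euclidean) norm of a spinor, `ψ^* ψ`. -/
def snormSq (v : Spinor) : ℝ := ∑ i : Fin 2, Complex.normSq (v i)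

/-- The sesquilinear expression `v^* γ^0 w`. -/
def bil (Γ : DiracMatrices) (v w : Spinor) : ℂ := star v ⬝ᵥ (Γ.γ 0).mulVec w

/-- The Dirac operator with mass: `i γ^μ ∂_μ ψ + m ψ`. -/
def dirac (Γ : DiracMatrices) (m : ℝ) (ψ : Spt → Spinor) : Spt → Spinor :=
  fun p => (∑ μ : Fin 3, Complex.I • (Γ.γ μ).mulVec (pt μ ψ p)) + (m : ℂ) • ψ p

/-- The Soler nonlinearity `(ψ^* γ^0 ψ) ψ`. -/
def soler (Γ : DiracMatrices) (ψ : Spt → Spinor) : Spt → Spinor :=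
  fun p => bil Γ (ψ p) (ψ p) • ψ p

/-- Lorentz boost `L_a = t ∂_a + x_a ∂_t`. -/
def Lb {V : Type*} [NormedAddCommGroup V] [NormedSpace ℝ V] (a : Fin 2) (f : Spt → V) :
    Spt → V :=
  fun p => p 0 • pt a.succ f p + p a.succ • pt 0 f p

/-- Modified Lorentz boost `hat L_a = L_a - (1/2) γ^0 γ^a`. -/
def hatLb (Γ : DiracMatrices) (a : Fin 2) (f : Spt → Spinor) : Spt → Spinor :=
  fun p => Lb a f p - (1 / 2 : ℂ) • (Γ.γ 0 * Γ.γ a.succ).mulVec (f p)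

/-- Semi-hyperboloidal derivative `underline ∂_a = (x_a/t) ∂_t + ∂_a`. -/
def und {V : Type*} [NormedAddCommGroup V] [NormedSpace ℝ V] (a : Fin 2) (f : Spt → V) :
    Spt → V :=
  fun p => (p a.succ / p 0) • pt 0 f p + pt a.succ f p

/-- Iterated translations `∂^I`. -/
def ptList {V : Type*} [NormedAddCommGroup V] [NormedSpace ℝ V] (I : List (Fin 3))
    (f : Spt → V) : Spt → V :=
  I.foldr (fun μ g => pt μ g) f

/-- Iterated Lorentz boosts `L^J`. -/
def LbList {V : Type*} [NormedAddCommGroup V] [NormedSpace ℝ V] (J : List (Fin 2))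
    (f : Spt → V) : Spt → V :=
  J.foldr (fun a g => Lb a g) f

/-- Iterated modified Lorentz boosts `hat L^J`. -/
def hatLbList (Γ : DiracMatrices) (J : List (Fin 2)) (f : Spt → Spinor) : Spt → Spinor :=
  J.foldr (fun a g => hatLb Γ a g) f

/-- `(v)_- = v - (x_a/t) γ^0 γ^a v` (with explicit `t`, `x`). -/
def tMinusX (Γ : DiracMatrices) (t : ℝ) (x : Sp) (v : Spinor) : Spinor :=
  v - ∑ a : Fin 2, (x a / t) • (Γ.γ 0 * Γ.γ a.succ).mulVec v

/-- `(v)_+ = v + (x_a/t) γ^0 γ^a v` (with explicit `t`, `x`). -/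
def tPlusX (Γ : DiracMatrices) (t : ℝ) (x : Sp) (v : Spinor) : Spinor :=
  v + ∑ a : Fin 2, (x a / t) • (Γ.γ 0 * Γ.γ a.succ).mulVec v

/-- `(v)_-` at a spacetime point. -/
def tMinus (Γ : DiracMatrices) (p : Spt) (v : Spinor) : Spinor :=
  tMinusX Γ (p 0) (fun a => p a.succ) v

/-- `[v]_- = v - (x_j/r) γ^0 γ^j v`. -/
def rMinus (Γ : DiracMatrices) (x : Sp) (v : Spinor) : Spinor :=
  v - ∑ a : Fin 2, (x a / Real.sqrt (xrsq x)) • (Γ.γ 0 * Γ.γ a.succ).mulVec v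

/-- `[v]_+ = v + (x_j/r) γ^0 γ^j v`. -/
def rPlus (Γ : DiracMatrices) (x : Sp) (v : Spinor) : Spinor :=
  v + ∑ a : Fin 2, (x a / Real.sqrt (xrsq x)) • (Γ.γ 0 * Γ.γ a.succ).mulVec v

/-- Hyperboloidal Dirac energy density `ψ^* ψ - (x_a/t) ψ^* γ^0 γ^a ψ`. -/
def EDdens (Γ : DiracMatrices) (ψ : Spt → Spinor) (p : Spt) : ℝ :=
  (star (ψ p) ⬝ᵥ ψ p
    - ∑ a : Fin 2, ((p a.succ / p 0 : ℝ) : ℂ)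
        * (star (ψ p) ⬝ᵥ (Γ.γ 0 * Γ.γ a.succ).mulVec (ψ p))).re

/-- The hyperboloidal Dirac energy `E^D(s, ψ)`. -/
def ED (Γ : DiracMatrices) (s : ℝ) (ψ : Spt → Spinor) : ℝ :=
  ∫ x : Sp, EDdens Γ ψ (onH s x)

/-- The energy `E^+(s, ψ) = ∫_{H_s} (ψ)_-^* (ψ)_-`. -/
def Eplus (Γ : DiracMatrices) (s : ℝ) (ψ : Spt → Spinor) : ℝ :=
  ∫ x : Sp, snormSq (tMinus Γ (onH s x) (ψ (onH s x)))

/-- The `L²_f(H_s)` norm of a spinor field. -/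
def L2f (s : ℝ) (f : Spt → Spinor) : ℝ :=
  Real.sqrt (∫ x : Sp, snormSq (f (onH s x)))

/-- Spatial partial derivative for functions on `ℝ²`. -/
def spd (a : Fin 2) (f : Sp → Spinor) : Sp → Spinor :=
  fun x => fderiv ℝ f x (Pi.single a 1)

/-- Squared Sobolev `H^k` norm: sum over spatial multi-indices `|α| ≤ k` of
`‖∂^α f‖_{L²(ℝ²)}²`. -/
def sobNormSq (k : ℕ) (f : Sp → Spinor) : ℝ :=
  ∑ i ∈ Finset.range (k + 1), ∑ j ∈ Finset.range (k + 1 - i),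
    ∫ x : Sp, snormSq ((spd 0)^[i] ((spd 1)^[j] f) x)

/-- The Sobolev `H^k` norm. -/
def sobNorm (k : ℕ) (f : Sp → Spinor) : ℝ := Real.sqrt (sobNormSq k f)

/-- Membership in `H^k(ℝ²; ℂ²)`: all derivatives of order `≤ k` are in `L²`. -/
def sobMem (k : ℕ) (f : Sp → Spinor) : Prop :=
  ∀ i j : ℕ, i + j ≤ k → MemLp ((spd 0)^[i] ((spd 1)^[j] f)) 2 (volume : Measure Sp)

/-- The time-`t` slice of a spacetime function. -/
def timeSlice (ψ : Spt → Spinor) (t : ℝ) : Sp → Spinor := fun x => ψ (Fin.cons t x)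

/-- The wave operator `□ = -∂_t ∂_t + Δ`. -/
def waveOp {V : Type*} [NormedAddCommGroup V] [NormedSpace ℝ V] (u : Spt → V) : Spt → V :=
  fun p => -(pt 0 (pt 0 u) p) + ∑ a : Fin 2, pt a.succ (pt a.succ u) p

/-- The operator `K = s ∂_s + 2 x^a underline∂_a`, written on the hyperboloid `H_s`
(where `s ∂_s = (s²/t) ∂_t`). -/
def Kop (s : ℝ) (u : Spt → Spinor) : Spt → Spinor :=
  fun p => (s ^ 2 / p 0) • pt 0 u p + (2 : ℝ) • ∑ a : Fin 2, p a.succ • und a u p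

/-- The conformal energy on `H_s`. -/
def Econ (s : ℝ) (u : Spt → Spinor) : ℝ :=
  ∫ x : Sp, ((∑ a : Fin 2, s ^ 2 * snormSq (und a u (onH s x)))
    + snormSq (Kop s u (onH s x) + u (onH s x)))

lemma star_mulVec_dot (M N : Matrix (Fin 2) (Fin 2) ℂ) (v w : Spinor) :
    star (M.mulVec v) ⬝ᵥ N.mulVec w = star v ⬝ᵥ (Mᴴ * N).mulVec w := by
  rw [Matrix.star_mulVec, ← Matrix.dotProduct_mulVec, Matrix.mulVec_mulVec]

/-- Hidden structure of the sesquilinear form `Ψ^* γ^0 Φ`: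
decomposition into good components, where `s² = t² - |x|²`. -/
theorem dirac_bilinear_hidden_structure
    (Γ : DiracMatrices) (t : ℝ) (ht : 0 < t) (x : Sp) (Ψ Φ : Spinor) :
    star Ψ ⬝ᵥ (Γ.γ 0).mulVec Φ
      = (1 / 4 : ℂ) *
          (star (tMinusX Γ t x Ψ) ⬝ᵥ (Γ.γ 0).mulVec (tMinusX Γ t x Φ)
            + star (tMinusX Γ t x Ψ) ⬝ᵥ (Γ.γ 0).mulVec (tPlusX Γ t x Φ)
            + star (tPlusX Γ t x Ψ) ⬝ᵥ (Γ.γ 0).mulVec (tMinusX Γ t x Φ)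
            + (((t ^ 2 - xrsq x) / t ^ 2 : ℝ) : ℂ) * (star Ψ ⬝ᵥ (Γ.γ 0).mulVec Φ)) := by
  have htne : (t : ℂ) ≠ 0 := by exact_mod_cast ht.ne'
  have htne' : t ≠ 0 := ht.ne'
  have half : ∀ {M N : Matrix (Fin 2) (Fin 2) ℂ}, M + M = N → M = (2 : ℂ)⁻¹ • N := by
    intro M N h
    rw [← h, ← two_smul ℂ M, smul_smul]
    norm_num
  -- Clifford relations at specific indices
  have h00 : Γ.γ 0 * Γ.γ 0 = 1 := by
    have h := half (Γ.clifford 0 0)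
    rw [show mink 0 0 = -1 from rfl] at h
    rw [h]
    norm_num [smul_smul]
  have h11 : Γ.γ 1 * Γ.γ 1 = -1 := by
    have h := half (Γ.clifford 1 1)
    rw [show mink 1 1 = 1 from rfl] at h
    rw [h]
    norm_num [smul_smul]
  have h22 : Γ.γ 2 * Γ.γ 2 = -1 := by
    have h := half (Γ.clifford 2 2)
    rw [show mink 2 2 = 1 from rfl] at h
    rw [h]
    norm_num [smul_smul]
  have h10 : Γ.γ 1 * Γ.γ 0 = -(Γ.γ 0 * Γ.γ 1) := by
    have h := Γ.clifford 1 0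
    rw [show mink 1 0 = 0 from rfl] at h
    norm_num at h
    exact eq_neg_of_add_eq_zero_left h
  have h20 : Γ.γ 2 * Γ.γ 0 = -(Γ.γ 0 * Γ.γ 2) := by
    have h := Γ.clifford 2 0
    rw [show mink 2 0 = 0 from rfl] at h
    norm_num at h
    exact eq_neg_of_add_eq_zero_left h
  have h21 : Γ.γ 2 * Γ.γ 1 = -(Γ.γ 1 * Γ.γ 2) := by
    have h := Γ.clifford 2 1
    rw [show mink 2 1 = 0 from rfl] at h
    norm_num at h
    exact eq_neg_of_add_eq_zero_left h
  -- adjoints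
  have a0 : (Γ.γ 0)ᴴ = Γ.γ 0 := by
    have h := Γ.adjoint 0
    rw [show mink 0 0 = -1 from rfl] at h
    norm_num at h
    exact h
  have a1 : (Γ.γ 1)ᴴ = -(Γ.γ 1) := by
    have h := Γ.adjoint 1
    rw [show mink 1 1 = 1 from rfl] at h
    norm_num at h
    simpa using h
  have a2 : (Γ.γ 2)ᴴ = -(Γ.γ 2) := by
    have h := Γ.adjoint 2
    rw [show mink 2 2 = 1 from rfl] at h
    norm_num at h
    simpa using h
  -- the matrix A
  set c1 : ℂ := ((x 0 / t : ℝ) : ℂ) with hc1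
  set c2 : ℂ := ((x 1 / t : ℝ) : ℂ) with hc2
  obtain ⟨A, hAdef⟩ : ∃ A : Matrix (Fin 2) (Fin 2) ℂ,
      A = c1 • (Γ.γ 0 * Γ.γ 1) + c2 • (Γ.γ 0 * Γ.γ 2) := ⟨_, rfl⟩
  have hAH : Aᴴ = A := by
    rw [hAdef, conjTranspose_add, conjTranspose_smul, conjTranspose_smul,
      conjTranspose_mul, conjTranspose_mul, a0, a1, a2]
    have s1 : star c1 = c1 := by rw [hc1]; exact Complex.conj_ofReal _
    have s2 : star c2 = c2 := by rw [hc2]; exact Complex.conj_ofReal _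
    rw [s1, s2, neg_mul, h10, neg_neg, neg_mul, h20, neg_neg]
  have hg0A : Γ.γ 0 * A = c1 • Γ.γ 1 + c2 • Γ.γ 2 := by
    rw [hAdef, mul_add, mul_smul_comm, mul_smul_comm, ← mul_assoc, ← mul_assoc, h00,
      one_mul, one_mul]
  have hAg0 : A * Γ.γ 0 = -(c1 • Γ.γ 1 + c2 • Γ.γ 2) := by
    rw [hAdef, add_mul, smul_mul_assoc, smul_mul_assoc, mul_assoc, mul_assoc, h10, h20,
      mul_neg, mul_neg, ← mul_assoc, ← mul_assoc, h00, one_mul, one_mul, smul_neg,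
      smul_neg, neg_add]
  have hanticomm : Γ.γ 0 * A + A * Γ.γ 0 = 0 := by
    rw [hg0A, hAg0]; exact add_neg_cancel _
  have hAgA : A * (Γ.γ 0 * A) = -((c1 ^ 2 + c2 ^ 2) • Γ.γ 0) := by
    rw [hg0A, hAdef]
    simp only [mul_add, add_mul, smul_mul_assoc, mul_smul_comm, smul_smul, mul_assoc,
      h11, h22, h21, mul_neg, mul_one, smul_neg, neg_neg, smul_add]
    module
  -- rewrite tMinusX / tPlusX as matrix actions
  have hminus : ∀ v : Spinor, tMinusX Γ t x v = (1 - A).mulVec v := by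
    intro v
    funext i
    simp only [tMinusX, Fin.sum_univ_two, Fin.succ_zero_eq_one, Fin.succ_one_eq_two,
      Matrix.sub_mulVec, Matrix.one_mulVec, hAdef, Matrix.add_mulVec,
      Matrix.smul_mulVec, Pi.sub_apply, Pi.add_apply, Pi.smul_apply,
      smul_eq_mul, hc1, hc2, Complex.real_smul]
  have hplus : ∀ v : Spinor, tPlusX Γ t x v = (1 + A).mulVec v := by
    intro v
    funext i
    simp only [tPlusX, Fin.sum_univ_two, Fin.succ_zero_eq_one, Fin.succ_one_eq_two,
      Matrix.add_mulVec, Matrix.one_mulVec, hAdef,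
      Matrix.smul_mulVec, Pi.add_apply, Pi.smul_apply,
      smul_eq_mul, hc1, hc2, Complex.real_smul]
  have hc1c2 : (((t ^ 2 - xrsq x) / t ^ 2 : ℝ) : ℂ) = 1 - (c1 ^ 2 + c2 ^ 2) := by
    rw [hc1, hc2, xrsq, Fin.sum_univ_two]
    push_cast
    field_simp
  rw [hminus, hminus, hplus, hplus, star_mulVec_dot, star_mulVec_dot, star_mulVec_dot,
    hc1c2]
  have hCT1 : (1 - A)ᴴ = 1 - A := by
    rw [conjTranspose_sub, conjTranspose_one, hAH]
  have hCT2 : (1 + A)ᴴ = 1 + A := by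
    rw [conjTranspose_add, conjTranspose_one, hAH]
  rw [hCT1, hCT2]
  simp only [Matrix.mulVec_mulVec]
  have expand :
      (1 - A) * (Γ.γ 0 * (1 - A)) + (1 - A) * (Γ.γ 0 * (1 + A)) + (1 + A) * (Γ.γ 0 * (1 - A))
        = Γ.γ 0 + Γ.γ 0 + Γ.γ 0 - (Γ.γ 0 * A + A * Γ.γ 0) - A * (Γ.γ 0 * A) := by
    noncomm_ring
  have hmat : (1 - A) * (Γ.γ 0 * (1 - A)) + (1 - A) * (Γ.γ 0 * (1 + A))
      + (1 + A) * (Γ.γ 0 * (1 - A)) = (3 + (c1 ^ 2 + c2 ^ 2)) • Γ.γ 0 := by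
    rw [expand, hanticomm, hAgA, sub_zero, sub_neg_eq_add]
    module
  have dot3 : star Ψ ⬝ᵥ ((1 - A) * (Γ.γ 0 * (1 - A))).mulVec Φ
      + star Ψ ⬝ᵥ ((1 - A) * (Γ.γ 0 * (1 + A))).mulVec Φ
      + star Ψ ⬝ᵥ ((1 + A) * (Γ.γ 0 * (1 - A))).mulVec Φ
      = (3 + (c1 ^ 2 + c2 ^ 2)) * (star Ψ ⬝ᵥ (Γ.γ 0).mulVec Φ) := by
    rw [← dotProduct_add, ← dotProduct_add, ← Matrix.add_mulVec,
      ← Matrix.add_mulVec]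
    rw [hmat, Matrix.smul_mulVec, dotProduct_smul, smul_eq_mul]
  rw [show (1 - A) * Γ.γ 0 * (1 - A) = (1 - A) * (Γ.γ 0 * (1 - A)) from mul_assoc _ _ _,
    show (1 - A) * Γ.γ 0 * (1 + A) = (1 - A) * (Γ.γ 0 * (1 + A)) from mul_assoc _ _ _,
    show (1 + A) * Γ.γ 0 * (1 - A) = (1 + A) * (Γ.γ 0 * (1 - A)) from mul_assoc _ _ _]
  rw [show star Ψ ⬝ᵥ ((1 - A) * (Γ.γ 0 * (1 - A))).mulVec Φ
        + star Ψ ⬝ᵥ ((1 - A) * (Γ.γ 0 * (1 + A))).mulVec Φ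
        + star Ψ ⬝ᵥ ((1 + A) * (Γ.γ 0 * (1 - A))).mulVec Φ
        + (1 - (c1 ^ 2 + c2 ^ 2)) * (star Ψ ⬝ᵥ (Γ.γ 0).mulVec Φ)
      = (3 + (c1 ^ 2 + c2 ^ 2)) * (star Ψ ⬝ᵥ (Γ.γ 0).mulVec Φ)
        + (1 - (c1 ^ 2 + c2 ^ 2)) * (star Ψ ⬝ᵥ (Γ.γ 0).mulVec Φ) from by rw [dot3]]
  ring
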